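/- The extended solution set 𝓑̄ := {u(y) : y ∈ [1,∞]^d} is a compact subset of H^1_0(Ω), where when y_j = ∞ exactly for j in a set S, u(y) is defined as the stiff limit solution u_S(y_{S^c}). -/

import Mathlib

open scoped BigOperators ENNReal InnerProductSpace
open Filter
open scoped Topology

noncomputable section

variable {V : Type*} [NormedAddCommGroup V] [InnerProductSpace ℝ V] [CompleteSpace V]

/-- The closed subspace `V_S` of functions whose gradient vanishes on `Ω_j` for all `j ∈ S`,
encoded through the local Dirichlet forms `B j v w = ∫_{Ω_j} ∇v·∇w`. -/
def VS {d : ℕ} (B : Fin d → V →L[ℝ] V →L[ℝ] ℝ) (S : Set (Fin d)) : Submodule ℝ V where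
  carrier := {v | ∀ j ∈ S, B j v = 0}
  add_mem' := by
    intro a b ha hb j hj
    simp only [Set.mem_setOf_eq] at *
    simp [map_add, ha j hj, hb j hj]
  zero_mem' := by intro j hj; simp
  smul_mem' := by
    intro c a ha j hj
    simp only [Set.mem_setOf_eq] at *
    simp [map_smul, ha j hj]

/-- The parametric energy bilinear form `a_y(v,w) = Σ_j y_j ∫_{Ω_j} ∇v·∇w`. -/
def aForm {d : ℕ} (B : Fin d → V →L[ℝ] V →L[ℝ] ℝ) (y : Fin d → ℝ) (v w : V) : ℝ :=
  ∑ j, y j * B j v w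

/-- The parametric energy norm `‖v‖_y`. -/
def eNorm {d : ℕ} (B : Fin d → V →L[ℝ] V →L[ℝ] ℝ) (y : Fin d → ℝ) (v : V) : ℝ :=
  Real.sqrt (aForm B y v v)

/-- `u` is the weak solution of the diffusion problem with (finite) parameter `y`. -/
def IsWeakSol {d : ℕ} (B : Fin d → V →L[ℝ] V →L[ℝ] ℝ) (f : V →L[ℝ] ℝ)
    (y : Fin d → ℝ) (u : V) : Prop :=
  ∀ v : V, aForm B y u v = f v

/-- `u` is the (possibly stiff-limit) solution for an extended parameter `y ∈ (0,∞]^d`: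
on the set `S = {j | y j = ∞}` of infinite entries, `u ∈ V_S` and `u` solves the
limit variational problem over `V_S`. -/
def IsSolE {d : ℕ} (B : Fin d → V →L[ℝ] V →L[ℝ] ℝ) (f : V →L[ℝ] ℝ)
    (y : Fin d → ℝ≥0∞) (u : V) : Prop :=
  u ∈ VS B {j | y j = ∞} ∧
  ∀ v ∈ VS B {j | y j = ∞}, ∑ j, (y j).toReal * B j u v = f v

/-- `p` is the `H^1_0`-orthogonal projection of `u` onto `K`. -/
def IsOrthProj (K : Submodule ℝ V) (u p : V) : Prop :=
  p ∈ K ∧ ∀ w ∈ K, ⟪u - p, w⟫_ℝ = 0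

/-- `p` is the Galerkin projection of `u` onto `K` for the energy inner product `⟨·,·⟩_y`. -/
def IsGalProj {d : ℕ} (B : Fin d → V →L[ℝ] V →L[ℝ] ℝ) (y : Fin d → ℝ)
    (K : Submodule ℝ V) (u p : V) : Prop :=
  p ∈ K ∧ ∀ w ∈ K, aForm B y (u - p) w = 0

/-- Galerkin projection for an extended parameter `y ∈ (0,∞]^d` (the energy inner
product being restricted to the finite components of `y`). -/
def IsGalProjE {d : ℕ} (B : Fin d → V →L[ℝ] V →L[ℝ] ℝ) (y : Fin d → ℝ≥0∞)
    (K : Submodule ℝ V) (u p : V) : Prop :=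
  p ∈ K ∧ ∀ w ∈ K, ∑ j, (y j).toReal * B j (u - p) w = 0

/-- The finite set of multi-indices `ν ∈ ℕ^d` of total degree `|ν| ≤ k`. -/
def mIdx (d k : ℕ) : Finset (Fin d → ℕ) :=
  (Fintype.piFinset fun _ : Fin d => Finset.range (k+1)).filter fun ν => ∑ j, ν j ≤ k

/-- The monomial `y^ν`. -/
def mono {d : ℕ} (y : Fin d → ℝ) (ν : Fin d → ℕ) : ℝ := ∏ j, y j ^ ν j

lemma bcs (B : Fin d → V →L[ℝ] V →L[ℝ] ℝ)
    (hsymm : ∀ (j : Fin d) (v w : V), B j v w = B j w v)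
    (hnonneg : ∀ (j : Fin d) (v : V), 0 ≤ B j v v)
    (j : Fin d) {v : V} (hv : B j v v = 0) : B j v = 0 := by
  ext w
  have h : ∀ t : ℝ, 0 ≤ B j w w * (t * t) + (2 * B j v w) * t + 0 := by
    intro t
    have h0 := hnonneg j (v + t • w)
    have he : B j (v + t • w) (v + t • w)
        = B j w w * (t * t) + (2 * B j v w) * t + 0 := by
      simp only [map_add, map_smul, ContinuousLinearMap.add_apply,
        ContinuousLinearMap.smul_apply, smul_eq_mul]
      rw [hsymm j w v, hv]
      ring
    rw [he] at h0
    exact h0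
  have hd := discrim_le_zero (a := B j w w) (b := 2 * B j v w) (c := (0:ℝ)) h
  rw [discrim] at hd
  have : (B j v w) ^ 2 ≤ 0 := by nlinarith
  have : B j v w = 0 := by nlinarith [sq_nonneg (B j v w)]
  simpa using this

lemma bj_le_sq (B : Fin d → V →L[ℝ] V →L[ℝ] ℝ)
    (hnonneg : ∀ (j : Fin d) (v : V), 0 ≤ B j v v)
    (hsum : ∀ v w : V, ∑ j, B j v w = ⟪v, w⟫_ℝ)
    (j : Fin d) (v : V) : B j v v ≤ ‖v‖ ^ 2 := by
  have h1 : ∑ i, B i v v = ‖v‖ ^ 2 := by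
    rw [hsum v v, real_inner_self_eq_norm_sq]
  calc B j v v ≤ ∑ i, B i v v :=
        Finset.single_le_sum (fun i _ => hnonneg i v) (Finset.mem_univ j)
    _ = ‖v‖ ^ 2 := h1

lemma apriori (B : Fin d → V →L[ℝ] V →L[ℝ] ℝ)
    (hnonneg : ∀ (j : Fin d) (v : V), 0 ≤ B j v v)
    (hsum : ∀ v w : V, ∑ j, B j v w = ⟪v, w⟫_ℝ)
    (f : V →L[ℝ] ℝ) (S : Set (Fin d)) (z : Fin d → ℝ)
    (hz1 : ∀ j, j ∉ S → 1 ≤ z j)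
    {u : V} (hu : ∀ j ∈ S, B j u = 0)
    (hequ : ∑ j, z j * B j u u = f u) :
    ‖u‖ ^ 2 ≤ f u ∧ ‖u‖ ≤ ‖f‖ ∧ 0 ≤ f u := by
  have h1 : ‖u‖ ^ 2 ≤ f u := by
    have h2 : ‖u‖ ^ 2 = ∑ j, B j u u := by
      rw [hsum u u, real_inner_self_eq_norm_sq]
    rw [h2, ← hequ]
    apply Finset.sum_le_sum
    intro j _
    by_cases hj : j ∈ S
    · rw [hu j hj]; simp
    · exact le_mul_of_one_le_left (hnonneg j u) (hz1 j hj)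
  have h3 : f u ≤ ‖f‖ * ‖u‖ := le_trans (le_abs_self _) (by
    have := f.le_opNorm u
    rwa [Real.norm_eq_abs] at this)
  have h4 : ‖u‖ ≤ ‖f‖ := by nlinarith [norm_nonneg u, norm_nonneg f]
  exact ⟨h1, h4, le_trans (sq_nonneg _) h1⟩

lemma key (B : Fin d → V →L[ℝ] V →L[ℝ] ℝ)
    (hsymm : ∀ (j : Fin d) (v w : V), B j v w = B j w v)
    (hnonneg : ∀ (j : Fin d) (v : V), 0 ≤ B j v v)
    (hsum : ∀ v w : V, ∑ j, B j v w = ⟪v, w⟫_ℝ)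
    (f : V →L[ℝ] ℝ) (S : Set (Fin d)) (z z' : Fin d → ℝ)
    (hz1 : ∀ j, j ∉ S → 1 ≤ z j) (hz1' : ∀ j, j ∉ S → 1 ≤ z' j)
    {u u' : V} (hu : ∀ j ∈ S, B j u = 0) (hu' : ∀ j ∈ S, B j u' = 0)
    (hequ : ∀ v, (∀ j ∈ S, B j v = 0) → ∑ j, z j * B j u v = f v)
    (hequ' : ∀ v, (∀ j ∈ S, B j v = 0) → ∑ j, z' j * B j u' v = f v) :
    ‖u - u'‖ ^ 2 ≤ f u - f u' + ‖f‖ ^ 2 * ∑ j, max (z j - z' j) 0 := by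
  have hv : ∀ j ∈ S, B j (u - u') = 0 := fun j hj => by
    rw [map_sub, hu j hj, hu' j hj, sub_zero]
  have hnu' : ‖u'‖ ≤ ‖f‖ :=
    (apriori B hnonneg hsum f S z' hz1' hu' (hequ' u' hu')).2.1
  have hBu' : ∀ j, B j u' u' ≤ ‖f‖ ^ 2 := fun j =>
    le_trans (bj_le_sq B hnonneg hsum j u')
      (by nlinarith [norm_nonneg u'])
  have step1 : ‖u - u'‖ ^ 2 ≤ ∑ j, z j * B j (u - u') (u - u') := by
    have h2 : ‖u - u'‖ ^ 2 = ∑ j, B j (u - u') (u - u') := by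
      rw [hsum, real_inner_self_eq_norm_sq]
    rw [h2]
    apply Finset.sum_le_sum
    intro j _
    by_cases hj : j ∈ S
    · rw [hv j hj]; simp
    · exact le_mul_of_one_le_left (hnonneg j _) (hz1 j hj)
  have step2 : ∑ j, z j * B j (u - u') (u - u')
      = f u - 2 * f u' + ∑ j, z j * B j u' u' := by
    have expand : ∀ j : Fin d, z j * B j (u - u') (u - u')
        = z j * B j u u - 2 * (z j * B j u u') + z j * B j u' u' := by
      intro j
      have hs := hsymm j u' u
      simp only [map_sub, ContinuousLinearMap.sub_apply]
      rw [hs]; ring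
    rw [Finset.sum_congr rfl fun j _ => expand j]
    rw [Finset.sum_add_distrib, Finset.sum_sub_distrib, ← Finset.mul_sum,
      hequ u hu, hequ u' hu']
  have step3 : ∑ j, z j * B j u' u'
      ≤ f u' + ‖f‖ ^ 2 * ∑ j, max (z j - z' j) 0 := by
    calc ∑ j, z j * B j u' u'
        ≤ ∑ j, (z' j * B j u' u' + max (z j - z' j) 0 * ‖f‖ ^ 2) := by
          apply Finset.sum_le_sum
          intro j _
          have h1 := hnonneg j u'
          have h2 := hBu' j
          have h3 : z j - z' j ≤ max (z j - z' j) 0 := le_max_left _ _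
          have h4 : (0 : ℝ) ≤ max (z j - z' j) 0 := le_max_right _ _
          nlinarith
      _ = f u' + ‖f‖ ^ 2 * ∑ j, max (z j - z' j) 0 := by
          rw [Finset.sum_add_distrib, hequ' u' hu', ← Finset.sum_mul]
          ring
  linarith

lemma mono_extract_list :
    ∀ (L : List (Fin d)) (g : ℕ → Fin d → ℝ),
    (∀ j ∈ L, Tendsto (fun n => g n j) atTop atTop) →
    ∃ φ : ℕ → ℕ, StrictMono φ ∧ ∀ j ∈ L, Monotone fun n => g (φ n) j
  | [], _, _ => ⟨id, strictMono_id, by simp⟩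
  | (j :: L), g, h => by
    obtain ⟨φ₁, hφ₁, hm⟩ := strictMono_subseq_of_tendsto_atTop (h j (by simp))
    obtain ⟨φ₂, hφ₂, hm₂⟩ := mono_extract_list L (fun n => g (φ₁ n))
      (fun i hi => (h i (by simp [hi])).comp hφ₁.tendsto_atTop)
    refine ⟨φ₁ ∘ φ₂, hφ₁.comp hφ₂, ?_⟩
    intro i hi
    rcases List.mem_cons.mp hi with rfl | hi
    · exact fun a b hab => hm.monotone (hφ₂.monotone hab)
    · exact hm₂ i hi

lemma mono_extract (p : Fin d → Prop) (g : ℕ → Fin d → ℝ)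
    (hp : ∀ j, p j → Tendsto (fun n => g n j) atTop atTop) :
    ∃ φ : ℕ → ℕ, StrictMono φ ∧ ∀ j, p j → Monotone fun n => g (φ n) j := by
  classical
  obtain ⟨φ, hφ, hm⟩ := mono_extract_list ((Finset.univ.filter p).toList) g
    (fun j hj => hp j (by simpa using (Finset.mem_toList.mp hj)))
  exact ⟨φ, hφ, fun j hj => hm j (Finset.mem_toList.mpr (by simpa using hj))⟩


theorem statement2
    {V : Type*} [NormedAddCommGroup V] [InnerProductSpace ℝ V] [CompleteSpace V]
    {d : ℕ}
    (B : Fin d → V →L[ℝ] V →L[ℝ] ℝ)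
    (hsymm : ∀ (j : Fin d) (v w : V), B j v w = B j w v)
    (hnonneg : ∀ (j : Fin d) (v : V), 0 ≤ B j v v)
    (hsum : ∀ v w : V, ∑ j, B j v w = ⟪v, w⟫_ℝ)
    (f : V →L[ℝ] ℝ) :
    IsCompact {u : V | ∃ y : Fin d → ℝ≥0∞, (∀ j, 1 ≤ y j) ∧ IsSolE B f y u} := by
  classical
  apply IsSeqCompact.isCompact
  intro u hu
  choose y hy1 hsol using hu
  -- Step 1: extract a subsequence along which the parameters converge in `[1,∞]^d`.
  have hKc : IsCompact {p : Fin d → ℝ≥0∞ | ∀ j, 1 ≤ p j} := by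
    apply IsClosed.isCompact
    have he : {p : Fin d → ℝ≥0∞ | ∀ j, 1 ≤ p j} = ⋂ j, {p | 1 ≤ p j} := by
      ext p; simp [Set.mem_iInter]
    rw [he]
    exact isClosed_iInter fun j => isClosed_le continuous_const (continuous_apply j)
  obtain ⟨ybar, hybarK, φ₁, hφ₁, hy⟩ := hKc.isSeqCompact (x := y) fun n => hy1 n
  -- Step 2: extract a subsequence along which the set of infinite coordinates is constant.
  obtain ⟨b, hb⟩ :=
    Finite.exists_infinite_fiber (fun n => fun j => decide (y (φ₁ n) j = ∞))
  have hfreq : ∃ᶠ n in atTop, (fun j => decide (y (φ₁ n) j = ∞)) = b :=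
    Nat.frequently_atTop_iff_infinite.mpr (Set.infinite_coe_iff.mp hb)
  obtain ⟨φ₂, hφ₂, hb2⟩ := Filter.extraction_of_frequently_atTop hfreq
  set S : Set (Fin d) := {j | b j = true} with hSdef
  have hS12 : ∀ n j, y (φ₁ (φ₂ n)) j = ∞ ↔ j ∈ S := by
    intro n j
    have hc : decide (y (φ₁ (φ₂ n)) j = ∞) = b j := congrFun (hb2 n) j
    rw [hSdef]
    simp only [Set.mem_setOf_eq, ← hc, decide_eq_true_eq]
  -- Step 3: extract a subsequence making the coordinates tending to infinity monotone.
  have hTtop : ∀ j, ybar j = ∞ → j ∉ S →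
      Tendsto (fun n => (y (φ₁ (φ₂ n)) j).toReal) atTop atTop := by
    intro j hj hjS
    have h1 : Tendsto (fun n => y (φ₁ (φ₂ n)) j) atTop (𝓝 (ybar j)) :=
      tendsto_pi_nhds.mp (hy.comp hφ₂.tendsto_atTop) j
    rw [hj, ENNReal.tendsto_nhds_top_iff_nnreal] at h1
    rw [tendsto_atTop]
    intro r
    filter_upwards [h1 (Real.toNNReal r)] with n hn
    have hne : y (φ₁ (φ₂ n)) j ≠ ∞ := fun h => hjS ((hS12 n j).mp h)
    have h2 : ((Real.toNNReal r : ℝ≥0∞)).toReal ≤ (y (φ₁ (φ₂ n)) j).toReal :=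
      ENNReal.toReal_mono hne hn.le
    calc r ≤ (Real.toNNReal r : ℝ) := Real.le_coe_toNNReal r
      _ ≤ _ := by simpa using h2
  obtain ⟨φ₃, hφ₃, hmono⟩ := mono_extract (fun j => ybar j = ∞ ∧ j ∉ S)
    (fun n j => (y (φ₁ (φ₂ n)) j).toReal) (fun j hj => hTtop j hj.1 hj.2)
  set ψ : ℕ → ℕ := fun n => φ₁ (φ₂ (φ₃ n)) with hψdef
  have hψ : StrictMono ψ := hφ₁.comp (hφ₂.comp hφ₃)
  set w : ℕ → V := fun n => u (ψ n) with hwdef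
  set Y : ℕ → Fin d → ℝ≥0∞ := fun n => y (ψ n) with hYdef
  set z : ℕ → Fin d → ℝ := fun n j => (Y n j).toReal with hzdef
  have hYlim : Tendsto Y atTop (𝓝 ybar) := hy.comp (hφ₂.comp hφ₃).tendsto_atTop
  have hYj : ∀ j, Tendsto (fun n => Y n j) atTop (𝓝 (ybar j)) := fun j =>
    tendsto_pi_nhds.mp hYlim j
  have hSY : ∀ n j, Y n j = ∞ ↔ j ∈ S := fun n j => hS12 (φ₃ n) j
  have hSbar : ∀ j ∈ S, ybar j = ∞ := by
    intro j hj
    have hconst : (fun n => Y n j) = fun _ => ∞ := funext fun n => (hSY n j).mpr hj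
    have h3 := hYj j
    rw [hconst] at h3
    exact tendsto_nhds_unique h3 tendsto_const_nhds
  have hz1 : ∀ n j, j ∉ S → 1 ≤ z n j := by
    intro n j hj
    have hne : Y n j ≠ ∞ := fun h => hj ((hSY n j).mp h)
    have h4 := ENNReal.toReal_mono hne (hy1 (ψ n) j)
    simpa using h4
  have hz0 : ∀ n j, 0 ≤ z n j := fun n j => ENNReal.toReal_nonneg
  have hzS : ∀ n j, j ∈ S → z n j = 0 := fun n j hj => by
    simp only [hzdef, (hSY n j).mpr hj, ENNReal.toReal_top]
  have hzT : ∀ j, ybar j = ∞ → j ∉ S → Monotone fun n => z n j := fun j h1 h2 =>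
    hmono j ⟨h1, h2⟩
  have hzTtop : ∀ j, ybar j = ∞ → j ∉ S → Tendsto (fun n => z n j) atTop atTop :=
    fun j h1 h2 => (hTtop j h1 h2).comp hφ₃.tendsto_atTop
  have hzF : ∀ j, ybar j ≠ ∞ → Tendsto (fun n => z n j) atTop (𝓝 ((ybar j).toReal)) :=
    fun j hj => (ENNReal.tendsto_toReal hj).comp (hYj j)
  -- the solutions along the subsequence
  have hSset : ∀ n, {j | Y n j = ∞} = S := fun n => Set.ext fun j => hSY n j
  have huS : ∀ n, ∀ j ∈ S, B j (w n) = 0 := by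
    intro n j hj
    have h1 := (hsol (ψ n)).1
    have h2 : w n ∈ VS B S := by
      rw [← hSset n]; exact h1
    exact h2 j hj
  have heq : ∀ n, ∀ v, (∀ j ∈ S, B j v = 0) → ∑ j, z n j * B j (w n) v = f v := by
    intro n v hv
    have h2 := (hsol (ψ n)).2 v (by rw [show {j | y (ψ n) j = ∞} = S from hSset n]; exact hv)
    exact h2
  have hfw : ∀ n, ∑ j, z n j * B j (w n) (w n) = f (w n) := fun n => heq n (w n) (huS n)
  have hap : ∀ n, ‖w n‖ ^ 2 ≤ f (w n) ∧ ‖w n‖ ≤ ‖f‖ ∧ 0 ≤ f (w n) := fun n =>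
    apriori B hnonneg hsum f S (z n) (fun j hj => hz1 n j hj) (huS n) (hfw n)
  have haK : ∀ n, f (w n) ≤ ‖f‖ ^ 2 := by
    intro n
    have h3 : f (w n) ≤ ‖f‖ * ‖w n‖ := le_trans (le_abs_self _) (by
      have h5 := f.le_opNorm (w n); rwa [Real.norm_eq_abs] at h5)
    nlinarith [(hap n).2.1, norm_nonneg f, norm_nonneg (w n)]
  have hkey : ∀ n m, ‖w n - w m‖ ^ 2
      ≤ f (w n) - f (w m) + ‖f‖ ^ 2 * ∑ j, max (z n j - z m j) 0 :=
    fun n m => key B hsymm hnonneg hsum f S (z n) (z m)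
      (fun j hj => hz1 n j hj) (fun j hj => hz1 m j hj) (huS n) (huS m)
      (fun v hv => heq n v hv) (fun v hv => heq m v hv)
  -- smallness of the parameter discrepancy
  have hDsmall : ∀ ε : ℝ, 0 < ε → ∃ N, ∀ n m, N ≤ n → n ≤ m →
      ∑ j, max (z n j - z m j) 0 ≤ ε := by
    intro ε hε
    have hd1 : (0:ℝ) < (d:ℝ) + 1 := by positivity
    have hε' : 0 < ε / ((d:ℝ) + 1) := by positivity
    have hev : ∀ᶠ n in atTop, ∀ j, ybar j ≠ ∞ →
        |z n j - (ybar j).toReal| < ε / ((d:ℝ) + 1) / 2 := by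
      rw [eventually_all]
      intro j
      by_cases hj : ybar j = ∞
      · exact Eventually.of_forall fun n h => absurd hj h
      · have hball := (hzF j hj).eventually
          (eventually_abs_sub_lt (ε := ε / ((d:ℝ) + 1) / 2) ((ybar j).toReal) (by positivity))
        filter_upwards [hball] with n hn
        exact fun _ => hn
    obtain ⟨N, hN⟩ := eventually_atTop.mp hev
    refine ⟨N, fun n m hn hnm => ?_⟩
    have hle : ∀ j : Fin d, max (z n j - z m j) 0 ≤ ε / ((d:ℝ) + 1) := by
      intro j
      by_cases hj : ybar j = ∞
      · by_cases hjS : j ∈ S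
        · rw [hzS n j hjS, hzS m j hjS]
          simpa using hε'.le
        · have h6 := hzT j hj hjS hnm
          rw [max_eq_right (by linarith)]
          exact hε'.le
      · have h1 := hN n hn j hj
        have h2 := hN m (le_trans hn hnm) j hj
        have h7 : |z n j - z m j| ≤ ε / ((d:ℝ) + 1) := by
          have h8 := abs_sub_le (z n j) ((ybar j).toReal) (z m j)
          have h9 := abs_sub_comm ((ybar j).toReal) (z m j)
          linarith
        exact max_le (le_trans (le_abs_self _) h7) (by positivity)
    calc ∑ j, max (z n j - z m j) 0 ≤ ∑ _j : Fin d, ε / ((d:ℝ) + 1) :=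
          Finset.sum_le_sum fun j _ => hle j
      _ = (d:ℝ) * (ε / ((d:ℝ) + 1)) := by
          simp [Finset.sum_const, Finset.card_univ, nsmul_eq_mul]
      _ = ε * ((d:ℝ) / ((d:ℝ) + 1)) := by ring
      _ ≤ ε * 1 := by
          apply mul_le_mul_of_nonneg_left _ hε.le
          rw [div_le_one hd1]; linarith
      _ = ε := mul_one ε
  -- the solutions form a Cauchy sequence
  have hcauchy : CauchySeq w := by
    rw [Metric.cauchySeq_iff']
    intro ε hε
    have hK0 : (0:ℝ) ≤ ‖f‖ ^ 2 := sq_nonneg _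
    have hε'0 : 0 < ε ^ 2 / 4 := by positivity
    obtain ⟨N₁, hN₁⟩ := hDsmall (ε ^ 2 / 4 / (‖f‖ ^ 2 + 1)) (by positivity)
    have hAne : (Set.range fun k => f (w (N₁ + k))).Nonempty := ⟨f (w N₁), ⟨0, by simp⟩⟩
    have hAbdd : BddBelow (Set.range fun k => f (w (N₁ + k))) := by
      refine ⟨0, ?_⟩
      rintro x ⟨k, rfl⟩
      exact (hap (N₁ + k)).2.2
    obtain ⟨x, hxA, hxlt⟩ := exists_lt_of_csInf_lt hAne
      (lt_add_of_pos_right (sInf (Set.range fun k => f (w (N₁ + k)))) hε'0)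
    obtain ⟨k₀, rfl⟩ := hxA
    refine ⟨N₁ + k₀, fun n hn => ?_⟩
    have hfn_ge : sInf (Set.range fun k => f (w (N₁ + k))) ≤ f (w n) := by
      have hnn : N₁ + (n - N₁) = n := by omega
      exact csInf_le hAbdd ⟨n - N₁, by show f (w (N₁ + (n - N₁))) = f (w n); rw [hnn]⟩
    have hD := hN₁ (N₁ + k₀) n (Nat.le_add_right _ _) hn
    have h1 := hkey (N₁ + k₀) n
    have h2 : ‖f‖ ^ 2 * ∑ j, max (z (N₁ + k₀) j - z n j) 0 ≤ ε ^ 2 / 4 := by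
      calc ‖f‖ ^ 2 * ∑ j, max (z (N₁ + k₀) j - z n j) 0
          ≤ ‖f‖ ^ 2 * (ε ^ 2 / 4 / (‖f‖ ^ 2 + 1)) := mul_le_mul_of_nonneg_left hD hK0
        _ = (ε ^ 2 / 4) * (‖f‖ ^ 2 / (‖f‖ ^ 2 + 1)) := by ring
        _ ≤ (ε ^ 2 / 4) * 1 := by
            apply mul_le_mul_of_nonneg_left _ hε'0.le
            rw [div_le_one (by positivity)]; linarith
        _ = ε ^ 2 / 4 := mul_one _
    have h3 : ‖w (N₁ + k₀) - w n‖ ^ 2 ≤ 2 * (ε ^ 2 / 4) := by linarith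
    have h4 : ‖w n - w (N₁ + k₀)‖ ^ 2 ≤ 2 * (ε ^ 2 / 4) := by rwa [norm_sub_rev]
    rw [dist_eq_norm]
    nlinarith [norm_nonneg (w n - w (N₁ + k₀)), hε]
  obtain ⟨ubar, hlim⟩ := cauchySeq_tendsto_of_complete hcauchy
  -- continuity of the forms along the limit
  have hBlim : ∀ (j : Fin d) (v : V),
      Tendsto (fun n => B j (w n) v) atTop (𝓝 (B j ubar v)) := by
    intro j v
    have hc : Continuous fun x : V => B j x v := ((B j).flip v).continuous
    exact (hc.tendsto ubar).comp hlim
  -- the limit lies in the stiff subspace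
  have hubarS : ∀ j, ybar j = ∞ → B j ubar = 0 := by
    intro j hj
    by_cases hjS : j ∈ S
    · have hc : Tendsto (fun n => B j (w n)) atTop (𝓝 (B j ubar)) :=
        ((B j).continuous.tendsto ubar).comp hlim
      have hconst : (fun n => B j (w n)) = fun _ => (0 : V →L[ℝ] ℝ) :=
        funext fun n => huS n j hjS
      rw [hconst] at hc
      exact (tendsto_nhds_unique tendsto_const_nhds hc).symm
    · have htop := hzTtop j hj hjS
      have hdiag : ∀ n, z n j * B j (w n) (w n) ≤ ‖f‖ ^ 2 := by
        intro n
        have h5 : z n j * B j (w n) (w n) ≤ ∑ i, z n i * B i (w n) (w n) :=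
          Finset.single_le_sum (fun i _ => mul_nonneg (hz0 n i) (hnonneg i _))
            (Finset.mem_univ j)
        rw [hfw n] at h5
        exact h5.trans (haK n)
      have hBwn : ∀ n, B j (w n) (w n) ≤ ‖f‖ ^ 2 / z n j := by
        intro n
        have hzpos : 0 < z n j := lt_of_lt_of_le one_pos (hz1 n j hjS)
        rw [le_div_iff₀ hzpos]
        nlinarith [hdiag n]
      have hto0 : Tendsto (fun n => B j (w n) (w n)) atTop (𝓝 0) :=
        squeeze_zero (fun n => hnonneg j _) hBwn (Tendsto.div_atTop tendsto_const_nhds htop)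
      have hdiff : Tendsto (fun n => B j (w n) ubar - B j (w n) (w n)) atTop (𝓝 0) := by
        apply squeeze_zero_norm (a := fun n => ‖B j‖ * ‖f‖ * ‖ubar - w n‖)
        · intro n
          have e1 : B j (w n) ubar - B j (w n) (w n) = B j (w n) (ubar - w n) := by
            rw [map_sub]
          rw [e1, Real.norm_eq_abs]
          calc |B j (w n) (ubar - w n)| ≤ ‖B j (w n)‖ * ‖ubar - w n‖ := by
                have h5 := (B j (w n)).le_opNorm (ubar - w n)
                rwa [Real.norm_eq_abs] at h5
            _ ≤ (‖B j‖ * ‖w n‖) * ‖ubar - w n‖ :=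
                mul_le_mul_of_nonneg_right ((B j).le_opNorm (w n)) (norm_nonneg _)
            _ ≤ ‖B j‖ * ‖f‖ * ‖ubar - w n‖ :=
                mul_le_mul_of_nonneg_right
                  (mul_le_mul_of_nonneg_left (hap n).2.1 (norm_nonneg (B j))) (norm_nonneg (ubar - w n))
        · have h6 : Tendsto (fun n => ubar - w n) atTop (𝓝 (ubar - ubar)) :=
            tendsto_const_nhds.sub hlim
          rw [sub_self] at h6
          have h7 := h6.norm
          rw [norm_zero] at h7
          have h8 := h7.const_mul (‖B j‖ * ‖f‖)
          simpa using h8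
      have h7 : Tendsto (fun n => B j (w n) (w n)) atTop (𝓝 (B j ubar ubar)) := by
        have h9 := (hBlim j ubar).sub hdiff
        simp only [sub_sub_cancel, sub_zero] at h9
        exact h9
      have h8 : B j ubar ubar = 0 := tendsto_nhds_unique h7 hto0
      exact bcs B hsymm hnonneg j h8
  have hmemubar : ubar ∈ VS B {j | ybar j = ∞} := fun j hj => hubarS j hj
  -- the limit satisfies the limit variational problem
  have hequbar : ∀ v ∈ VS B {j | ybar j = ∞}, ∑ j, (ybar j).toReal * B j ubar v = f v := by
    intro v hv
    have hvS : ∀ j ∈ S, B j v = 0 := fun j hj => hv j (hSbar j hj)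
    have hconst : Tendsto (fun n => ∑ j, z n j * B j (w n) v) atTop (𝓝 (f v)) := by
      have he : (fun n => ∑ j, z n j * B j (w n) v) = fun _ => f v :=
        funext fun n => heq n v hvS
      rw [he]
      exact tendsto_const_nhds
    have hterm : ∀ j : Fin d, Tendsto (fun n => z n j * B j (w n) v) atTop
        (𝓝 ((ybar j).toReal * B j ubar v)) := by
      intro j
      by_cases hj : ybar j = ∞
      · have hBv : B j v = 0 := hv j hj
        have hzero : ∀ x : V, B j x v = 0 := fun x => by
          rw [hsymm j x v, hBv]; rfl
        have he2 : (fun n => z n j * B j (w n) v) = fun _ => (0:ℝ) :=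
          funext fun n => by rw [hzero (w n), mul_zero]
        rw [he2, hj, hzero ubar, mul_zero]
        exact tendsto_const_nhds
      · exact (hzF j hj).mul (hBlim j v)
    have hsum' := tendsto_finset_sum Finset.univ fun (j : Fin d) _ => hterm j
    exact tendsto_nhds_unique hsum' hconst
  exact ⟨ubar, ⟨ybar, hybarK, hmemubar, hequbar⟩, ψ, hψ, hlim⟩

end
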